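/- For the transverse-field Ising model, the derivative of the symmetry-breaking gap Δ(g) = E₀⁻(g) − E₀⁺(g) at the critical point g = 1 satisfies Δ'(1) = Δ(1)/2 + 1 = tan(π/(4N)) + 1; in particular lim_{N→∞} Δ'(1) = 1 > 0. -/

import Mathlib

open Real Finset Filter

private lemma term_hasDeriv (k : ℝ) (hk : 0 < Real.sin k) :
    HasDerivAt (fun g : ℝ => Real.sqrt ((g - Real.cos k) ^ 2 + (Real.sin k) ^ 2))
      (Real.sqrt ((1 - Real.cos k) ^ 2 + (Real.sin k) ^ 2) / 2) 1 := by
  have hq : 0 < (1 - Real.cos k) ^ 2 + (Real.sin k) ^ 2 := by nlinarith [sq_nonneg (1 - Real.cos k)]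
  have h1 : HasDerivAt (fun g : ℝ => (g - Real.cos k) ^ 2 + (Real.sin k) ^ 2)
      (2 * (1 - Real.cos k)) 1 := by
    have h := (((hasDerivAt_id (1:ℝ)).sub_const (Real.cos k)).pow 2).add_const ((Real.sin k)^2)
    simpa using h
  have h2 := h1.sqrt hq.ne'
  convert h2 using 1
  have hpy := Real.sin_sq_add_cos_sq k
  have hs : 0 < Real.sqrt ((1 - Real.cos k) ^ 2 + (Real.sin k) ^ 2) := Real.sqrt_pos.2 hq
  have hm : Real.sqrt ((1 - Real.cos k) ^ 2 + (Real.sin k) ^ 2) ^ 2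
      = (1 - Real.cos k) ^ 2 + (Real.sin k) ^ 2 := Real.sq_sqrt hq.le
  field_simp
  nlinarith [hm, hpy]

private lemma sqrt_val (k : ℝ) (h0 : 0 ≤ k) (h2 : k ≤ 2 * π) :
    Real.sqrt ((1 - Real.cos k) ^ 2 + (Real.sin k) ^ 2) = 2 * Real.sin (k / 2) := by
  have hpi := Real.pi_pos
  have hs : 0 ≤ Real.sin (k / 2) := Real.sin_nonneg_of_nonneg_of_le_pi (by linarith) (by linarith)
  have hc : Real.cos k = 1 - 2 * Real.sin (k / 2) ^ 2 := by
    have h := Real.cos_two_mul (k / 2)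
    have hp := Real.sin_sq_add_cos_sq (k / 2)
    rw [show 2 * (k / 2) = k by ring] at h
    linarith
  have he : (1 - Real.cos k) ^ 2 + (Real.sin k) ^ 2 = (2 * Real.sin (k / 2)) ^ 2 := by
    have hp := Real.sin_sq_add_cos_sq k
    linear_combination hp - 2 * hc
  rw [he, Real.sqrt_sq (by linarith)]

private lemma sum_sin_odd (θ : ℝ) (n : ℕ) :
    2 * Real.sin θ * ∑ j ∈ Finset.range n, Real.sin ((2 * (j:ℝ) + 1) * θ)
      = 1 - Real.cos (2 * (n:ℝ) * θ) := by
  induction n with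
  | zero => simp
  | succ m ih =>
    rw [Finset.sum_range_succ, mul_add, ih]
    have h := Real.cos_sub_cos (2 * (m:ℝ) * θ) (2 * ((m:ℝ) + 1) * θ)
    rw [show (2 * (m:ℝ) * θ + 2 * ((m:ℝ)+1) * θ)/2 = (2*(m:ℝ)+1)*θ by ring,
        show (2 * (m:ℝ) * θ - 2 * ((m:ℝ)+1) * θ)/2 = -θ by ring, Real.sin_neg] at h
    push_cast
    linear_combination -h

private lemma sum_sin_even (θ : ℝ) (n : ℕ) :
    2 * Real.sin θ * ∑ j ∈ Finset.range n, Real.sin ((2 * (j:ℝ) + 2) * θ)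
      = Real.cos θ - Real.cos ((2 * (n:ℝ) + 1) * θ) := by
  induction n with
  | zero => simp
  | succ m ih =>
    rw [Finset.sum_range_succ, mul_add, ih]
    have h := Real.cos_sub_cos ((2 * (m:ℝ) + 1) * θ) ((2 * (m:ℝ) + 3) * θ)
    rw [show ((2*(m:ℝ)+1)*θ + (2*(m:ℝ)+3)*θ)/2 = (2*(m:ℝ)+2)*θ by ring,
        show ((2*(m:ℝ)+1)*θ - (2*(m:ℝ)+3)*θ)/2 = -θ by ring, Real.sin_neg] at h
    push_cast
    rw [show (2*((m:ℝ)+1)+1)*θ = (2*(m:ℝ)+3)*θ by ring]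
    linear_combination -h


/-- For the transverse-field Ising chain of even size `N`, the derivative of the
symmetry-breaking gap `Δ(g) = E₀⁻(g) − E₀⁺(g)` at the critical point `g = 1` satisfies
`Δ'(1) = Δ(1)/2 + 1 = tan(π/(4N)) + 1`; in particular `Δ'(1) → 1` as `N → ∞`. -/
theorem gap_derivative_at_critical (N : ℕ) (hN : Even N) (hN2 : 2 ≤ N) :
    let E₀p : ℝ → ℝ := fun g =>
      -2 * ∑ j ∈ Finset.range (N / 2),
        Real.sqrt ((g - Real.cos ((2 * (j : ℝ) + 1) * π / N)) ^ 2 +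
          (Real.sin ((2 * (j : ℝ) + 1) * π / N)) ^ 2)
    let E₀m : ℝ → ℝ := fun g =>
      -2 * (∑ j ∈ Finset.range (N / 2 - 1),
        Real.sqrt ((g - Real.cos (2 * ((j : ℝ) + 1) * π / N)) ^ 2 +
          (Real.sin (2 * ((j : ℝ) + 1) * π / N)) ^ 2)) - 2
    let Δ : ℝ → ℝ := fun g => E₀m g - E₀p g
    deriv Δ 1 = Δ 1 / 2 + 1 ∧
    deriv Δ 1 = Real.tan (π / (4 * N)) + 1 ∧
    Tendsto (fun M : ℕ => Real.tan (π / (4 * M)) + 1) atTop (nhds 1) := by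
  intro E₀p E₀m Δ
  have hpi := Real.pi_pos
  have hNR : (0:ℝ) < N := by exact_mod_cast Nat.lt_of_lt_of_le Nat.zero_lt_two hN2
  obtain ⟨m₀, hm₀⟩ := hN
  have hn2 : 2 * (N / 2) = N := by omega
  set n : ℕ := N / 2 with hn
  have hkp : ∀ j ∈ Finset.range n, 0 < Real.sin ((2 * (j:ℝ) + 1) * π / N) := by
    intro j hj
    have hj' : 2 * j + 1 < N := by simp only [Finset.mem_range] at hj; omega
    have hj'' : 2 * (j:ℝ) + 1 < N := by exact_mod_cast hj'
    apply Real.sin_pos_of_pos_of_lt_pi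
    · positivity
    · rw [div_lt_iff₀ hNR]; nlinarith
  have hkm : ∀ j ∈ Finset.range (n - 1), 0 < Real.sin (2 * ((j:ℝ) + 1) * π / N) := by
    intro j hj
    have hj' : 2 * (j + 1) < N := by simp only [Finset.mem_range] at hj; omega
    have hj'' : 2 * ((j:ℝ) + 1) < N := by exact_mod_cast hj'
    apply Real.sin_pos_of_pos_of_lt_pi
    · positivity
    · rw [div_lt_iff₀ hNR]; nlinarith
  have hDp : HasDerivAt E₀p (-2 * ∑ j ∈ Finset.range n,
      Real.sqrt ((1 - Real.cos ((2 * (j:ℝ) + 1) * π / N)) ^ 2 +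
        (Real.sin ((2 * (j:ℝ) + 1) * π / N)) ^ 2) / 2) 1 :=
    HasDerivAt.const_mul (-2 : ℝ)
      (HasDerivAt.fun_sum (fun j hj => term_hasDeriv _ (hkp j hj)))
  have hDm : HasDerivAt E₀m (-2 * ∑ j ∈ Finset.range (n - 1),
      Real.sqrt ((1 - Real.cos (2 * ((j:ℝ) + 1) * π / N)) ^ 2 +
        (Real.sin (2 * ((j:ℝ) + 1) * π / N)) ^ 2) / 2) 1 :=
    (HasDerivAt.const_mul (-2 : ℝ)
      (HasDerivAt.fun_sum (fun j hj => term_hasDeriv _ (hkm j hj)))).sub_const 2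
  have hderiv : deriv Δ 1 =
      (-2 * ∑ j ∈ Finset.range (n - 1),
        Real.sqrt ((1 - Real.cos (2 * ((j:ℝ) + 1) * π / N)) ^ 2 +
          (Real.sin (2 * ((j:ℝ) + 1) * π / N)) ^ 2) / 2) -
      (-2 * ∑ j ∈ Finset.range n,
        Real.sqrt ((1 - Real.cos ((2 * (j:ℝ) + 1) * π / N)) ^ 2 +
          (Real.sin ((2 * (j:ℝ) + 1) * π / N)) ^ 2) / 2) :=
    (hDm.sub hDp).deriv
  refine ⟨?_, ?_, ?_⟩
  · rw [hderiv]
    simp only [Δ, E₀m, E₀p, ← hn]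
    rw [← Finset.sum_div, ← Finset.sum_div]
    ring
  · rw [hderiv]
    set θ : ℝ := π / (2 * N) with hθ
    have hvp : ∑ j ∈ Finset.range n,
        (Real.sqrt ((1 - Real.cos ((2 * (j:ℝ) + 1) * π / N)) ^ 2 +
          (Real.sin ((2 * (j:ℝ) + 1) * π / N)) ^ 2) / 2)
        = ∑ j ∈ Finset.range n, Real.sin ((2 * (j:ℝ) + 1) * θ) := by
      refine Finset.sum_congr rfl fun j hj => ?_
      have hj' : 2 * j + 1 < N := by simp only [Finset.mem_range] at hj; omega
      have hj'' : 2 * (j:ℝ) + 1 < N := by exact_mod_cast hj'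
      rw [sqrt_val _ (by positivity) (by rw [div_le_iff₀ hNR]; nlinarith)]
      rw [show (2 * (j:ℝ) + 1) * π / N / 2 = (2 * (j:ℝ) + 1) * θ from by
        rw [hθ]; field_simp]
      ring
    have hvm : ∑ j ∈ Finset.range (n - 1),
        (Real.sqrt ((1 - Real.cos (2 * ((j:ℝ) + 1) * π / N)) ^ 2 +
          (Real.sin (2 * ((j:ℝ) + 1) * π / N)) ^ 2) / 2)
        = ∑ j ∈ Finset.range (n - 1), Real.sin ((2 * (j:ℝ) + 2) * θ) := by
      refine Finset.sum_congr rfl fun j hj => ?_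
      have hj' : 2 * (j + 1) < N := by simp only [Finset.mem_range] at hj; omega
      have hj'' : 2 * ((j:ℝ) + 1) < N := by exact_mod_cast hj'
      rw [sqrt_val _ (by positivity) (by rw [div_le_iff₀ hNR]; nlinarith)]
      rw [show 2 * ((j:ℝ) + 1) * π / N / 2 = (2 * (j:ℝ) + 2) * θ from by
        rw [hθ]; field_simp]
      ring
    rw [hvp, hvm]
    have hθpos : 0 < θ := by rw [hθ]; positivity
    have hN2R : (2:ℝ) ≤ N := by exact_mod_cast hN2
    have hθlt : θ < π / 2 := by
      rw [hθ, div_lt_div_iff₀ (by positivity) (by norm_num)]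
      nlinarith
    have hs : 0 < Real.sin θ := Real.sin_pos_of_pos_of_lt_pi hθpos (by linarith)
    have hNn : (2 * (n:ℝ)) = N := by exact_mod_cast hn2
    have hNθ : (N:ℝ) * θ = π / 2 := by rw [hθ]; field_simp
    have hSp := sum_sin_odd θ n
    rw [show 2 * (n:ℝ) * θ = π / 2 from by linear_combination θ * hNn + hNθ,
      Real.cos_pi_div_two] at hSp
    have hSm := sum_sin_even θ (n - 1)
    have hcast : ((n - 1 : ℕ) : ℝ) = (n:ℝ) - 1 := by
      have h1 : 1 ≤ n := by omega
      push_cast [h1]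
      ring
    rw [hcast, show (2 * ((n:ℝ) - 1) + 1) * θ = π / 2 - θ from by
        linear_combination θ * hNn + hNθ,
      Real.cos_pi_div_two_sub] at hSm
    have hSp' : ∑ j ∈ Finset.range n, Real.sin ((2 * (j:ℝ) + 1) * θ)
        = 1 / (2 * Real.sin θ) := by
      rw [eq_div_iff (by positivity)]; linarith
    have hSm' : ∑ j ∈ Finset.range (n - 1), Real.sin ((2 * (j:ℝ) + 2) * θ)
        = (Real.cos θ - Real.sin θ) / (2 * Real.sin θ) := by
      rw [eq_div_iff (by positivity)]; linarith
    rw [hSp', hSm']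
    set φ : ℝ := π / (4 * N) with hφ
    have hθφ : θ = 2 * φ := by rw [hθ, hφ]; ring
    have hφpos : 0 < φ := by rw [hφ]; positivity
    have hφlt : φ < π / 2 := by linarith
    have hsφ : 0 < Real.sin φ := Real.sin_pos_of_pos_of_lt_pi hφpos (by linarith)
    have hcφ : 0 < Real.cos φ := Real.cos_pos_of_mem_Ioo ⟨by linarith, hφlt⟩
    have hsθ : Real.sin θ = 2 * Real.sin φ * Real.cos φ := by
      rw [hθφ, Real.sin_two_mul]
    have hcθ : Real.cos θ = 1 - 2 * Real.sin φ ^ 2 := by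
      rw [hθφ, Real.cos_two_mul]
      have := Real.sin_sq_add_cos_sq φ
      linarith
    have hgap : (1 - Real.cos θ) / Real.sin θ = Real.tan φ := by
      rw [Real.tan_eq_sin_div_cos, hcθ, hsθ,
        div_eq_div_iff (by positivity) hcφ.ne']
      ring
    rw [← hgap]
    field_simp
    ring
  · have h1 : Tendsto (fun M : ℕ => π / (4 * (M:ℝ))) atTop (nhds 0) := by
      apply Tendsto.div_atTop tendsto_const_nhds
      exact Tendsto.const_mul_atTop (by norm_num) tendsto_natCast_atTop_atTop
    have h2 : ContinuousAt Real.tan 0 := by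
      apply Real.continuousAt_tan.2
      simp
    have h3 := h2.tendsto.comp h1
    rw [Real.tan_zero] at h3
    have h4 := h3.add (tendsto_const_nhds (x := (1:ℝ)))
    simpa using h4
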